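/- For a two-color Pólya urn with a=1 and initial composition (α,β), there is a constant C such that for all n ≥ 1 and 1 ≤ k ≤ n−1, |P(Y_n = k) − n^{-1} f_{α,β}(k/n)| ≤ C·n^{-1} f_{α,β}(k/n)·(1/k + 1/(n−k)), where f_{α,β} is the Beta(α,β) density. -/

import Mathlib

set_option maxHeartbeats 1000000
/-- The law of `Y_n` for the two-colour Pólya urn with unit replacement and initial
weights `α, β`: `polyaP α β n i = P(Y_n = i)`. -/
noncomputable def polyaP (α β : ℝ) : ℕ → ℕ → ℝ
  | 0, i => if i = 0 then 1 else 0
  | n + 1, 0 => polyaP α β n 0 * ((β + n) / (α + β + n))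
  | n + 1, j + 1 =>
      polyaP α β n (j + 1) * ((β + ((n : ℝ) - (j + 1))) / (α + β + n)) +
        polyaP α β n j * ((α + j) / (α + β + n))

/-- The Beta(α,β) density on `(0,1)`. -/
noncomputable def betaDen (α β x : ℝ) : ℝ :=
  (Real.Gamma (α + β) / (Real.Gamma α * Real.Gamma β)) * x ^ (α - 1) * (1 - x) ^ (β - 1)

open Real

lemma log_convex_combo {a b : ℝ} (ha : 0 < a) (hb : 0 < b) {t : ℝ} (ht0 : 0 ≤ t) (ht1 : t ≤ 1) :
    Gamma (t * a + (1 - t) * b) ≤ Gamma a ^ t * Gamma b ^ (1 - t) := by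
  have hab : (0:ℝ) < t * a + (1 - t) * b := by
    rcases eq_or_lt_of_le ht0 with h | h
    · simp [← h, hb]
    · have h1 : 0 < t * a := mul_pos h ha
      have h2 : 0 ≤ (1 - t) * b := mul_nonneg (by linarith) hb.le
      linarith
  have h := convexOn_log_Gamma.2 (Set.mem_Ioi.mpr ha) (Set.mem_Ioi.mpr hb)
      ht0 (by linarith : (0:ℝ) ≤ 1 - t) (by ring)
  simp only [Function.comp_apply, smul_eq_mul] at h
  have hga := Gamma_pos_of_pos ha
  have hgb := Gamma_pos_of_pos hb
  have e1 : Gamma a ^ t = rexp (t * log (Gamma a)) := by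
    rw [Real.rpow_def_of_pos hga, mul_comm]
  have e2 : Gamma b ^ (1 - t) = rexp ((1 - t) * log (Gamma b)) := by
    rw [Real.rpow_def_of_pos hgb, mul_comm]
  have h3 := Real.exp_le_exp.mpr h
  rw [Real.exp_log (Gamma_pos_of_pos hab), Real.exp_add] at h3
  rw [e1, e2]
  convert h3 using 3 <;> ring

lemma gautschi_upper (s x : ℝ) (hs0 : 0 ≤ s) (hs1 : s ≤ 1) (hx : 0 < x) :
    Gamma (x + s) ≤ Gamma (x + 1) * x ^ (s - 1) := by
  have hx1 : (0:ℝ) < x + 1 := by linarith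
  have hgx1 := Gamma_pos_of_pos hx1
  have h2 := log_convex_combo hx hx1 (by linarith : (0:ℝ) ≤ 1 - s) (by linarith)
  rw [show (1-s) * x + (1 - (1-s)) * (x+1) = x + s by ring] at h2
  have hGx : Gamma x = Gamma (x + 1) / x := by
    rw [Gamma_add_one hx.ne']; field_simp
  calc Gamma (x + s) ≤ Gamma x ^ (1-s) * Gamma (x+1) ^ (1-(1-s)) := h2
    _ = Gamma (x + 1) * x ^ (s - 1) := by
        rw [hGx, Real.div_rpow hgx1.le hx.le, div_mul_eq_mul_div,
          ← Real.rpow_add hgx1, show (1-s) + (1-(1-s)) = 1 by ring, Real.rpow_one,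
          show s - 1 = -(1-s) by ring, Real.rpow_neg hx.le, div_eq_mul_inv]

lemma gautschi_lower (s x : ℝ) (hs0 : 0 ≤ s) (hs1 : s ≤ 1) (hx : 0 < x) :
    Gamma (x + 1) * (x + s) ^ (s - 1) ≤ Gamma (x + s) := by
  have hxs : (0:ℝ) < x + s := by linarith
  have hgxs := Gamma_pos_of_pos hxs
  have h2 := log_convex_combo hxs (by linarith : (0:ℝ) < x + s + 1) hs0 hs1
  rw [show s * (x+s) + (1-s) * (x+s+1) = x + 1 by ring] at h2
  have hG : Gamma (x+s+1) = (x+s) * Gamma (x+s) := Gamma_add_one hxs.ne'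
  have key : Gamma (x + 1) ≤ Gamma (x+s) * (x+s) ^ (1-s) := by
    calc Gamma (x+1) ≤ Gamma (x+s) ^ s * Gamma (x+s+1) ^ (1-s) := h2
      _ = Gamma (x+s) * (x+s) ^ (1-s) := by
          rw [hG, Real.mul_rpow hxs.le hgxs.le, ← mul_assoc, mul_comm (Gamma (x+s) ^ s),
            mul_assoc, ← Real.rpow_add hgxs, show s + (1-s) = 1 by ring, Real.rpow_one,
            mul_comm ((x+s)^(1-s))]
  have hp : (0:ℝ) < (x+s) ^ (s-1) := Real.rpow_pos_of_pos hxs _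
  have := mul_le_mul_of_nonneg_right key hp.le
  rwa [mul_assoc, ← Real.rpow_add hxs, show (1-s) + (s-1) = 0 by ring, Real.rpow_zero,
    mul_one] at this

noncomputable def gRat (a x : ℝ) : ℝ := Gamma (x + a) / (Gamma (x + 1) * x ^ (a - 1))

lemma gRat_bound_aux : ∀ N : ℕ, ∀ a : ℝ, 0 < a → a ≤ N →
    ∃ C : ℝ, 0 ≤ C ∧ ∀ x : ℝ, 1 ≤ x → 1/2 ≤ gRat a x ∧ |gRat a x - 1| ≤ C / x := by
  intro N
  induction N with
  | zero => intro a ha ha'; exact absurd (ha.trans_le ha') (by simp)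
  | succ N ih =>
    intro a ha haN
    by_cases h1 : a ≤ 1
    · refine ⟨1, zero_le_one, fun x hx => ?_⟩
      have hx0 : (0:ℝ) < x := by linarith
      have hxa : (0:ℝ) < x + a := by linarith
      have hden : (0:ℝ) < Gamma (x + 1) * x ^ (a - 1) :=
        mul_pos (Gamma_pos_of_pos (by linarith)) (rpow_pos_of_pos hx0 _)
      have hup : gRat a x ≤ 1 := by
        rw [gRat, div_le_one hden]
        exact gautschi_upper a x ha.le h1 hx0
      have hlow : (x + a) ^ (a-1) / x ^ (a-1) ≤ gRat a x := by
        rw [gRat, div_le_div_iff₀ (rpow_pos_of_pos hx0 _) hden]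
        calc (x+a)^(a-1) * (Gamma (x+1) * x ^ (a-1))
            = (Gamma (x+1) * (x+a)^(a-1)) * x ^ (a-1) := by ring
          _ ≤ Gamma (x+a) * x ^ (a-1) :=
              mul_le_mul_of_nonneg_right (gautschi_lower a x ha.le h1 hx0)
                (rpow_pos_of_pos hx0 _).le
      have hr : (x+a)^(a-1) / x^(a-1) = ((x+a)/x) ^ (a-1) :=
        (Real.div_rpow hxa.le hx0.le _).symm
      have hrx : (1:ℝ) ≤ (x+a)/x := by
        rw [le_div_iff₀ hx0]; linarith
      set q : ℝ := ((x+a)/x) ^ (1-a) with hqdef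
      have hq0 : 0 < q := rpow_pos_of_pos (by positivity) _
      have e1 : ((x+a)/x) ^ (a-1) = q⁻¹ := by
        rw [hqdef, show a - 1 = -(1-a) by ring, Real.rpow_neg (by positivity)]
      have hqle : q ≤ (x+1)/x := by
        calc q ≤ ((x+a)/x) ^ (1:ℝ) :=
              Real.rpow_le_rpow_of_exponent_le hrx (by linarith)
          _ = (x+a)/x := Real.rpow_one _
          _ ≤ (x+1)/x := by gcongr
      have hginv : x/(x+1) ≤ q⁻¹ := by
        have h5 : ((x+1)/x)⁻¹ ≤ q⁻¹ := inv_anti₀ hq0 hqle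
        rwa [inv_div] at h5
      have hglow : x/(x+1) ≤ gRat a x := by
        calc x/(x+1) ≤ q⁻¹ := hginv
          _ = ((x+a)/x) ^ (a-1) := e1.symm
          _ = (x+a)^(a-1) / x^(a-1) := hr.symm
          _ ≤ gRat a x := hlow
      have hfrac : (1:ℝ)/2 ≤ x/(x+1) := by
        rw [div_le_div_iff₀ (by norm_num) (by linarith)]; linarith
      refine ⟨hfrac.trans hglow, ?_⟩
      rw [abs_le]
      constructor
      · have h6 : 1 - 1/x ≤ x/(x+1) := by
          rw [show 1 - 1/x = (x-1)/x by field_simp, div_le_div_iff₀ hx0 (by linarith)]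
          nlinarith
        linarith [hglow]
      · linarith [hup, div_nonneg (zero_le_one) hx0.le]
    · push_neg at h1
      obtain ⟨C, hC0, hC⟩ := ih (a - 1) (by linarith) (by push_cast at haN ⊢; linarith)
      refine ⟨(a-1) * (1 + C) + C, by nlinarith, fun x hx => ?_⟩
      have hx0 : (0:ℝ) < x := by linarith
      obtain ⟨hg1, hg2⟩ := hC x hx
      have hrec : gRat a x = ((x + a - 1)/x) * gRat (a-1) x := by
        rw [gRat, gRat]
        have e1 : Gamma (x + a) = (x + a - 1) * Gamma (x + a - 1) := by
          have h0 : (0:ℝ) < x + a - 1 := by linarith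
          have := Real.Gamma_add_one h0.ne'
          rw [show x + a - 1 + 1 = x + a by ring] at this
          rw [this]
        have e2 : x ^ (a - 1) = x ^ (a - 1 - 1) * x := by
          rw [← Real.rpow_add_one hx0.ne' (a-1-1)]; ring_nf
        rw [e1, e2]
        have h3 : Gamma (x+1) ≠ 0 := (Gamma_pos_of_pos (by linarith)).ne'
        have h4 : x ^ (a-1-1) ≠ 0 := (rpow_pos_of_pos hx0 _).ne'
        field_simp
        ring
      have hu1 : (1:ℝ) ≤ (x + a - 1)/x := by rw [le_div_iff₀ hx0]; linarith
      have hu2 : (x + a - 1)/x = 1 + (a-1)/x := by field_simp; ring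
      constructor
      · calc (1:ℝ)/2 ≤ gRat (a-1) x := hg1
          _ = 1 * gRat (a-1) x := (one_mul _).symm
          _ ≤ ((x + a - 1)/x) * gRat (a-1) x :=
              mul_le_mul_of_nonneg_right hu1 (by linarith)
          _ = gRat a x := hrec.symm
      · have hgub : gRat (a-1) x ≤ 1 + C := by
          have : gRat (a-1) x - 1 ≤ C / x := (abs_le.mp hg2).2
          have : C / x ≤ C := by
            rw [div_le_iff₀ hx0]; nlinarith
          linarith [(abs_le.mp hg2).2, this]
        rw [hrec, hu2]
        have expand : (1 + (a-1)/x) * gRat (a-1) x - 1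
            = (gRat (a-1) x - 1) + ((a-1)/x) * gRat (a-1) x := by ring
        rw [expand]
        calc |(gRat (a-1) x - 1) + ((a-1)/x) * gRat (a-1) x|
            ≤ |gRat (a-1) x - 1| + |((a-1)/x) * gRat (a-1) x| := abs_add_le _ _
          _ ≤ C/x + ((a-1)/x) * (1 + C) := by
              apply add_le_add hg2
              have hn : (0:ℝ) ≤ (a-1)/x := div_nonneg (by linarith) hx0.le
              rw [abs_of_nonneg (mul_nonneg hn (by linarith))]
              apply mul_le_mul_of_nonneg_left hgub hn
          _ = ((a-1) * (1+C) + C) / x := by field_simp; ring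

lemma gRat_bound (a : ℝ) (ha : 0 < a) :
    ∃ C : ℝ, 0 ≤ C ∧ ∀ x : ℝ, 1 ≤ x → 1/2 ≤ gRat a x ∧ |gRat a x - 1| ≤ C / x :=
  gRat_bound_aux ⌈a⌉₊ a ha (Nat.le_ceil a)

noncomputable def polyaF (α β J N : ℝ) : ℝ :=
  (Gamma (α + β) / (Gamma α * Gamma β)) * Gamma (J + α) * Gamma (N - J + β) * Gamma (N + 1) /
    (Gamma (J + 1) * Gamma (N - J + 1) * Gamma (N + α + β))

lemma polyaP_eq_zero (α β : ℝ) : ∀ n k : ℕ, n < k → polyaP α β n k = 0 := by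
  intro n
  induction n with
  | zero =>
    intro k hk
    match k, hk with
    | j + 1, _ => simp [polyaP]
  | succ n ih =>
    intro k hk
    match k, hk with
    | j + 1, hk =>
      have h1 : n < j + 1 := by omega
      have h2 : n < j := by omega
      simp [polyaP, ih _ h1, ih _ h2]

lemma Gamma_succ {x y : ℝ} (hy : 0 < y) (h : x = y + 1) : Gamma x = y * Gamma y := by
  rw [h, Gamma_add_one hy.ne']

section Frec
variable {α β : ℝ} (hα : 0 < α) (hβ : 0 < β)
include hα hβ

lemma polyaF_rec0 (N : ℝ) (hN : 0 ≤ N) :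
    polyaF α β 0 (N + 1) = polyaF α β 0 N * ((β + N) / (α + β + N)) := by
  have g1 : Gamma (N + 1 - 0 + β) = (N - 0 + β) * Gamma (N - 0 + β) := Gamma_succ (by linarith) (by ring)
  have g2 : Gamma (N + 1 + 1) = (N + 1) * Gamma (N + 1) := Gamma_succ (by linarith) (by ring)
  have g3 : Gamma (N + 1 - 0 + 1) = (N - 0 + 1) * Gamma (N - 0 + 1) := Gamma_succ (by linarith) (by ring)
  have g4 : Gamma (N + 1 + α + β) = (N + α + β) * Gamma (N + α + β) := Gamma_succ (by linarith) (by ring)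
  rw [polyaF, polyaF, g1, g2, g3, g4]
  have p1 := Gamma_pos_of_pos (show (0:ℝ) < N - 0 + β by linarith)
  have p2 := Gamma_pos_of_pos (show (0:ℝ) < N + 1 by linarith)
  have p3 := Gamma_pos_of_pos (show (0:ℝ) < N - 0 + 1 by linarith)
  have p4 := Gamma_pos_of_pos (show (0:ℝ) < N + α + β by linarith)
  have p5 := Gamma_pos_of_pos hα
  have p6 := Gamma_pos_of_pos hβ
  have p7 : (0:ℝ) < α + β + N := by linarith
  have p8 : (0:ℝ) < N + 1 := by linarith
  have n1 : N - 0 + 1 ≠ 0 := by intro h; linarith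
  have n2 : N + α + β ≠ 0 := by intro h; linarith
  have n3 : α + β + N ≠ 0 := p7.ne'
  have n4 : N + 1 ≠ 0 := p8.ne'
  have n5 : N - 0 + β ≠ 0 := by intro h; linarith
  field_simp
  ring

lemma polyaF_top (N : ℝ) (hN : 0 ≤ N) :
    polyaF α β (N + 1) (N + 1) = polyaF α β N N * ((α + N) / (α + β + N)) := by
  have g1 : Gamma (N + 1 + α) = (N + α) * Gamma (N + α) := Gamma_succ (by linarith) (by ring)
  have g2 : Gamma (N + 1 - (N + 1) + β) = Gamma (N - N + β) := by ring_nf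
  have g3 : Gamma (N + 1 + 1) = (N + 1) * Gamma (N + 1) := Gamma_succ (by linarith) (by ring)
  have g4 : Gamma (N + 1 - (N + 1) + 1) = Gamma (N - N + 1) := by ring_nf
  have g5 : Gamma (N + 1 + α + β) = (N + α + β) * Gamma (N + α + β) := Gamma_succ (by linarith) (by ring)
  rw [polyaF, polyaF, g1, g2, g3, g4, g5]
  have p1 := Gamma_pos_of_pos (show (0:ℝ) < N + α by linarith)
  have p2 := Gamma_pos_of_pos (show (0:ℝ) < N - N + β by linarith)
  have p3 := Gamma_pos_of_pos (show (0:ℝ) < N + 1 by linarith)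
  have p4 := Gamma_pos_of_pos (show (0:ℝ) < N - N + 1 by linarith)
  have p5 := Gamma_pos_of_pos (show (0:ℝ) < N + α + β by linarith)
  have p6 := Gamma_pos_of_pos hα
  have p7 := Gamma_pos_of_pos hβ
  have p8 : (0:ℝ) < α + β + N := by linarith
  have n1 : N - N + 1 ≠ 0 := by intro h; linarith
  have n2 : N + α + β ≠ 0 := by intro h; linarith
  have n3 : α + β + N ≠ 0 := p8.ne'
  have n4 : N + 1 ≠ 0 := by intro h; linarith
  have n5 : N - N + β ≠ 0 := by intro h; linarith
  have n6 : N + α ≠ 0 := by intro h; linarith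
  field_simp
  ring

lemma polyaF_rec (J N : ℝ) (hJ : 0 ≤ J) (hJN : J + 1 ≤ N) :
    polyaF α β (J + 1) (N + 1) =
      polyaF α β (J + 1) N * ((β + (N - (J + 1))) / (α + β + N)) +
        polyaF α β J N * ((α + J) / (α + β + N)) := by
  have g1 : Gamma (J + 1 + α) = (J + α) * Gamma (J + α) := Gamma_succ (by linarith) (by ring)
  have g2 : Gamma (N + 1 - (J + 1) + β) = (N - (J + 1) + β) * Gamma (N - (J + 1) + β) := Gamma_succ (by linarith) (by ring)
  have g3 : Gamma (N + 1 + 1) = (N + 1) * Gamma (N + 1) := Gamma_succ (by linarith) (by ring)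
  have g4 : Gamma (J + 1 + 1) = (J + 1) * Gamma (J + 1) := Gamma_succ (by linarith) (by ring)
  have g5 : Gamma (N + 1 - (J + 1) + 1) = (N - (J + 1) + 1) * Gamma (N - (J + 1) + 1) := Gamma_succ (by linarith) (by ring)
  have g6 : Gamma (N + 1 + α + β) = (N + α + β) * Gamma (N + α + β) := Gamma_succ (by linarith) (by ring)
  have g7 : Gamma (N - J + β) = (N - (J + 1) + β) * Gamma (N - (J + 1) + β) := Gamma_succ (by linarith) (by ring)
  have g8 : Gamma (N - J + 1) = (N - (J + 1) + 1) * Gamma (N - (J + 1) + 1) := Gamma_succ (by linarith) (by ring)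
  rw [polyaF, polyaF, polyaF, g1, g2, g3, g4, g5, g6, g7, g8]
  have p1 := Gamma_pos_of_pos (show (0:ℝ) < J + α by linarith)
  have p2 := Gamma_pos_of_pos (show (0:ℝ) < N - (J + 1) + β by linarith)
  have p3 := Gamma_pos_of_pos (show (0:ℝ) < N + 1 by linarith)
  have p4 := Gamma_pos_of_pos (show (0:ℝ) < J + 1 by linarith)
  have p5 := Gamma_pos_of_pos (show (0:ℝ) < N - (J + 1) + 1 by linarith)
  have p6 := Gamma_pos_of_pos (show (0:ℝ) < N + α + β by linarith)
  have p7 := Gamma_pos_of_pos hα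
  have p8 := Gamma_pos_of_pos hβ
  have p9 : (0:ℝ) < α + β + N := by linarith
  have n1 : (J:ℝ) + 1 ≠ 0 := by positivity
  have n2 : N - (J + 1) + 1 ≠ 0 := by intro h; linarith
  have n3 : N + α + β ≠ 0 := by intro h; linarith
  have n4 : α + β + N ≠ 0 := p9.ne'
  have n5 : N + 1 ≠ 0 := by intro h; linarith
  have n6 : N - (J + 1) + β ≠ 0 := by intro h; linarith
  have n7 : J + α ≠ 0 := by intro h; linarith
  field_simp
  ring

lemma polyaP_eq_polyaF :
    ∀ n k : ℕ, k ≤ n → polyaP α β n k = polyaF α β k n := by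
  intro n
  induction n with
  | zero =>
    intro k hk
    interval_cases k
    simp only [polyaP, polyaF, Nat.cast_zero, if_pos rfl]
    have p5 := Gamma_pos_of_pos hα
    have p6 := Gamma_pos_of_pos hβ
    have p7 := Gamma_pos_of_pos (show (0:ℝ) < α + β by linarith)
    norm_num [Gamma_one]
    field_simp
  | succ n ih =>
    intro k hk
    match k with
    | 0 =>
      show polyaP α β n 0 * ((β + n) / (α + β + n)) = _
      rw [ih 0 (Nat.zero_le _)]
      push_cast
      rw [polyaF_rec0 hα hβ (n:ℝ) (Nat.cast_nonneg n)]
    | j + 1 =>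
      by_cases hjn : j + 1 ≤ n
      · show polyaP α β n (j+1) * _ + polyaP α β n j * _ = _
        rw [ih (j+1) hjn, ih j (by omega)]
        push_cast
        rw [polyaF_rec hα hβ (j:ℝ) (n:ℝ) (Nat.cast_nonneg j) (by exact_mod_cast hjn)]
      · have hj : j = n := by omega
        subst hj
        show polyaP α β j (j+1) * _ + polyaP α β j j * _ = _
        rw [polyaP_eq_zero α β j (j+1) (by omega), ih j le_rfl]
        push_cast
        rw [polyaF_top hα hβ (j:ℝ) (Nat.cast_nonneg j)]
        ring
end Frec

lemma polyaF_eq_betaDen (α β : ℝ) (hα : 0 < α) (hβ : 0 < β) (X N : ℝ)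
    (hX1 : 1 ≤ X) (hY1 : 1 ≤ N - X) :
    polyaF α β X N =
      N⁻¹ * betaDen α β (X / N) * (gRat α X * gRat β (N - X) * (gRat (α + β) N)⁻¹) := by
  have hX0 : (0:ℝ) < X := by linarith
  have hN0 : (0:ℝ) < N := by linarith
  have hY0 : (0:ℝ) < N - X := by linarith
  rw [polyaF, betaDen, gRat, gRat, gRat, show N + (α + β) = N + α + β by ring,
    show 1 - X / N = (N - X) / N by field_simp,
    Real.div_rpow hX0.le hN0.le, Real.div_rpow hY0.le hN0.le]
  have hNp : N ^ (α + β - 1) = N ^ (α - 1) * N ^ (β - 1) * N := by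
    rw [← Real.rpow_add hN0, ← Real.rpow_add_one hN0.ne']
    congr 1; ring
  rw [hNp]
  have q1 := Gamma_pos_of_pos (show (0:ℝ) < X + α by linarith)
  have q2 := Gamma_pos_of_pos (show (0:ℝ) < N - X + β by linarith)
  have q3 := Gamma_pos_of_pos (show (0:ℝ) < N + 1 by linarith)
  have q4 := Gamma_pos_of_pos (show (0:ℝ) < X + 1 by linarith)
  have q5 := Gamma_pos_of_pos (show (0:ℝ) < N - X + 1 by linarith)
  have q6 := Gamma_pos_of_pos (show (0:ℝ) < N + α + β by linarith)
  have q7 := Gamma_pos_of_pos hα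
  have q8 := Gamma_pos_of_pos hβ
  have q9 := Gamma_pos_of_pos (show (0:ℝ) < α + β by linarith)
  have r1 : X ^ (α - 1) ≠ 0 := (rpow_pos_of_pos hX0 _).ne'
  have r2 : (N - X) ^ (β - 1) ≠ 0 := (rpow_pos_of_pos hY0 _).ne'
  have r3 : N ^ (α - 1) ≠ 0 := (rpow_pos_of_pos hN0 _).ne'
  have r4 : N ^ (β - 1) ≠ 0 := (rpow_pos_of_pos hN0 _).ne'
  field_simp

/-- Local limit estimate: `P(Y_n = k) = n⁻¹ f_{α,β}(k/n) (1 + O(1/k) + O(1/(n−k)))`,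
uniformly over `1 ≤ k ≤ n − 1`. -/
theorem polya_local_limit (α β : ℝ) (hα : 0 < α) (hβ : 0 < β) :
    ∃ C : ℝ, ∀ n : ℕ, 1 ≤ n → ∀ k : ℕ, 1 ≤ k → k ≤ n - 1 →
      |polyaP α β n k - (n : ℝ)⁻¹ * betaDen α β (k / n)| ≤
        C * (n : ℝ)⁻¹ * betaDen α β (k / n) * (1 / k + 1 / ((n : ℝ) - k)) := by
  obtain ⟨C1, hC1n, hC1⟩ := gRat_bound α hα
  obtain ⟨C2, hC2n, hC2⟩ := gRat_bound β hβ
  obtain ⟨C3, hC3n, hC3⟩ := gRat_bound (α + β) (by linarith)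
  set C0 : ℝ := max (max C1 C2) C3 with hC0def
  have hC0n : 0 ≤ C0 := le_trans hC3n (le_max_right _ _)
  refine ⟨2*C0*(1+C0)^2 + C0*(1+C0) + C0, fun n hn k hk1 hk2 => ?_⟩
  have hkn : k + 1 ≤ n := by omega
  set X : ℝ := (k : ℝ) with hXdef
  set N : ℝ := (n : ℝ) with hNdef
  have hX1 : 1 ≤ X := by rw [hXdef]; exact_mod_cast hk1
  have hXN : X + 1 ≤ N := by rw [hXdef, hNdef]; exact_mod_cast hkn
  have hY1 : 1 ≤ N - X := by linarith
  have hX0 : (0:ℝ) < X := by linarith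
  have hN0 : (0:ℝ) < N := by linarith
  have hY0 : (0:ℝ) < N - X := by linarith
  have hN1 : 1 ≤ N := by linarith
  rw [polyaP_eq_polyaF hα hβ n k (by omega), polyaF_eq_betaDen α β hα hβ X N hX1 hY1]
  set f : ℝ := betaDen α β (X / N) with hfdef
  have hf0 : 0 ≤ f := by
    rw [hfdef, betaDen]
    have h2 : (0:ℝ) ≤ 1 - X/N := by
      rw [sub_nonneg, div_le_one hN0]; linarith
    have hc : (0:ℝ) ≤ Gamma (α+β) / (Gamma α * Gamma β) :=
      le_of_lt (div_pos (Gamma_pos_of_pos (by linarith))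
        (mul_pos (Gamma_pos_of_pos hα) (Gamma_pos_of_pos hβ)))
    exact mul_nonneg (mul_nonneg hc (rpow_nonneg (by positivity) _)) (rpow_nonneg h2 _)
  set g1 : ℝ := gRat α X
  set g2 : ℝ := gRat β (N - X)
  set g3 : ℝ := gRat (α + β) N
  obtain ⟨b1, e1'⟩ := hC1 X hX1
  obtain ⟨b2, e2'⟩ := hC2 (N - X) hY1
  obtain ⟨b3, e3'⟩ := hC3 N hN1
  have e1 : |g1 - 1| ≤ C0 / X := le_trans e1' (by gcongr; exact le_trans (le_max_left _ _) (le_max_left _ _))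
  have e2 : |g2 - 1| ≤ C0 / (N - X) := le_trans e2' (by gcongr; exact le_trans (le_max_right _ _) (le_max_left _ _))
  have e3 : |g3 - 1| ≤ C0 / N := le_trans e3' (by gcongr; exact le_max_right _ _)
  have hg1pos : 0 < g1 := by linarith
  have hg2pos : 0 < g2 := by linarith
  have hg3pos : 0 < g3 := by linarith
  have hub1 : g1 ≤ 1 + C0 := by
    have := (abs_le.mp e1).2
    have h2 : C0 / X ≤ C0 := div_le_self hC0n hX1
    linarith
  have hub2 : g2 ≤ 1 + C0 := by
    have := (abs_le.mp e2).2
    have h2 : C0 / (N - X) ≤ C0 := div_le_self hC0n hY1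
    linarith
  have hg3inv : |g3⁻¹ - 1| ≤ 2 * C0 / N := by
    have heq : g3⁻¹ - 1 = (1 - g3) / g3 := by field_simp
    rw [heq, abs_div, abs_of_pos hg3pos, div_le_iff₀ hg3pos]
    calc |1 - g3| = |g3 - 1| := abs_sub_comm _ _
      _ ≤ C0 / N := e3
      _ = 2 * C0 / N * (1/2) := by ring
      _ ≤ 2 * C0 / N * g3 := by
          apply mul_le_mul_of_nonneg_left b3 (by positivity)
  have hE : |g1 * g2 * g3⁻¹ - 1| ≤
      (2*C0*(1+C0)^2 + C0*(1+C0) + C0) * (1 / X + 1 / (N - X)) := by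
    have hdec : g1 * g2 * g3⁻¹ - 1 =
        g1 * g2 * (g3⁻¹ - 1) + g1 * (g2 - 1) + (g1 - 1) := by ring
    have habs : |g1 * g2 * g3⁻¹ - 1| ≤
        g1 * g2 * |g3⁻¹ - 1| + g1 * |g2 - 1| + |g1 - 1| := by
      rw [hdec]
      calc |g1 * g2 * (g3⁻¹ - 1) + g1 * (g2 - 1) + (g1 - 1)|
          ≤ |g1 * g2 * (g3⁻¹ - 1) + g1 * (g2 - 1)| + |g1 - 1| := abs_add_le _ _
        _ ≤ |g1 * g2 * (g3⁻¹ - 1)| + |g1 * (g2 - 1)| + |g1 - 1| := by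
            have := abs_add_le (g1 * g2 * (g3⁻¹ - 1)) (g1 * (g2 - 1))
            linarith
        _ = g1 * g2 * |g3⁻¹ - 1| + g1 * |g2 - 1| + |g1 - 1| := by
            rw [abs_mul, abs_mul, abs_mul, abs_of_pos hg1pos, abs_of_pos hg2pos]
    have hT1 : g1 * g2 * |g3⁻¹ - 1| ≤ (1+C0) * (1+C0) * (2*C0/X) := by
      have h1 : 2 * C0 / N ≤ 2 * C0 / X := by gcongr; linarith
      have h2 : |g3⁻¹ - 1| ≤ 2 * C0 / X := le_trans hg3inv h1
      have : g1 * g2 ≤ (1+C0) * (1+C0) :=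
        mul_le_mul hub1 hub2 hg2pos.le (by linarith)
      exact mul_le_mul this h2 (abs_nonneg _) (by positivity)
    have hT2 : g1 * |g2 - 1| ≤ (1+C0) * (C0 / (N - X)) :=
      mul_le_mul hub1 e2 (abs_nonneg _) (by linarith)
    have hcomb : (1+C0) * (1+C0) * (2*C0/X) + (1+C0) * (C0/(N-X)) + C0/X =
        (2*C0*(1+C0)^2 + C0) * (1/X) + (C0*(1+C0)) * (1/(N-X)) := by ring
    have hfin : (2*C0*(1+C0)^2 + C0) * (1/X) + (C0*(1+C0)) * (1/(N-X)) ≤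
        (2*C0*(1+C0)^2 + C0*(1+C0) + C0) * (1 / X + 1 / (N - X)) := by
      have hu : (0:ℝ) ≤ 1/X := by positivity
      have hv : (0:ℝ) ≤ 1/(N-X) := by positivity
      have h1 : (2*C0*(1+C0)^2 + C0) ≤ 2*C0*(1+C0)^2 + C0*(1+C0) + C0 := by nlinarith
      have h2 : (C0*(1+C0)) ≤ 2*C0*(1+C0)^2 + C0*(1+C0) + C0 := by nlinarith
      calc (2*C0*(1+C0)^2 + C0) * (1/X) + (C0*(1+C0)) * (1/(N-X))
          ≤ (2*C0*(1+C0)^2 + C0*(1+C0) + C0) * (1/X) +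
            (2*C0*(1+C0)^2 + C0*(1+C0) + C0) * (1/(N-X)) :=
            add_le_add (mul_le_mul_of_nonneg_right h1 hu) (mul_le_mul_of_nonneg_right h2 hv)
        _ = (2*C0*(1+C0)^2 + C0*(1+C0) + C0) * (1 / X + 1 / (N - X)) := by ring
    calc |g1 * g2 * g3⁻¹ - 1| ≤ g1 * g2 * |g3⁻¹ - 1| + g1 * |g2 - 1| + |g1 - 1| := habs
      _ ≤ (1+C0) * (1+C0) * (2*C0/X) + (1+C0) * (C0/(N-X)) + C0/X := by
          exact add_le_add (add_le_add hT1 hT2) e1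
      _ = (2*C0*(1+C0)^2 + C0) * (1/X) + (C0*(1+C0)) * (1/(N-X)) := hcomb
      _ ≤ _ := hfin
  have hrw : N⁻¹ * f * (g1 * g2 * g3⁻¹) - N⁻¹ * f = (N⁻¹ * f) * (g1 * g2 * g3⁻¹ - 1) := by
    ring
  rw [hrw, abs_mul, abs_of_nonneg (mul_nonneg (by positivity) hf0)]
  calc N⁻¹ * f * |g1 * g2 * g3⁻¹ - 1|
      ≤ N⁻¹ * f * ((2*C0*(1+C0)^2 + C0*(1+C0) + C0) * (1 / X + 1 / (N - X))) :=
        mul_le_mul_of_nonneg_left hE (mul_nonneg (by positivity) hf0)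
    _ = (2*C0*(1+C0)^2 + C0*(1+C0) + C0) * N⁻¹ * f * (1 / X + 1 / (N - X)) := by ring
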